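/- Fix σ² > 0, P_I > 0, matrices F (N_I × M_E) and H (N_I × M_I), and define R(S_E, S_I) = log₂ det(I + (F S_E Fᴴ + σ² I)^{-1} H S_I Hᴴ). Let S_E* be an M_E × M_E positive semidefinite matrix with tr(S_E*) = P_E > 0, spectral decomposition S_E* = Σ_{i=1}^{d} γ_i w_i w_iᴴ (γ_i > 0, w_i orthonormal), t_i = γ_i T / P_E with T > 0, and S_{E,i} = P_E w_i w_iᴴ. Then sup over d-tuples (S_{I,1}, …, S_{I,d}) of positive semidefinite matrices with tr(S_{I,i}) ≤ P_I of (1/T) Σ_{i=1}^{d} t_i R(S_{E,i}, S_{I,i}) is at least sup over positive semidefinite S_I with tr(S_I) ≤ P_I of R(S_E*, S_I). -/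

import Mathlib

open Matrix BigOperators ComplexOrder

set_option linter.unusedSectionVars false
set_option maxHeartbeats 1000000

section Aux

variable {n : Type*} [Fintype n] [DecidableEq n] {m : Type*} [Fintype m] [DecidableEq m]

lemma complex_smul_pos {r : ℝ} {z : ℂ} (hr : 0 < r) (hz : 0 < z) : 0 < (r : ℂ) * z := by
  rw [Complex.lt_def] at hz ⊢
  constructor
  · simpa [Complex.mul_re, hz.2.symm] using mul_pos hr hz.1
  · simp [Complex.mul_im, ← hz.2]

lemma complex_smul_nonneg {r : ℝ} {z : ℂ} (hr : 0 ≤ r) (hz : 0 ≤ z) : 0 ≤ (r : ℂ) * z := by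
  rw [Complex.le_def] at hz ⊢
  constructor
  · simpa [Complex.mul_re, ← hz.2] using mul_nonneg hr hz.1
  · simp [Complex.mul_im, ← hz.2]

lemma herm_det_real {M : Matrix n n ℂ} (hM : M.IsHermitian) : M.det = (M.det.re : ℂ) := by
  have h := M.det_conjTranspose
  rw [hM.eq] at h
  have h2 : (starRingEnd ℂ) M.det = M.det := by rw [starRingEnd_apply]; exact h.symm
  exact ((Complex.conj_eq_iff_re).mp h2).symm

lemma posDef_det_re_pos {M : Matrix n n ℂ} (hM : M.PosDef) : 0 < M.det.re := by
  have := hM.det_pos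
  rw [Complex.lt_def] at this
  exact this.1

lemma posSemidef_det_re_nonneg {M : Matrix n n ℂ} (hM : M.PosSemidef) : 0 ≤ M.det.re := by
  have h1 : M.det = ∏ i, (hM.1.eigenvalues i : ℂ) := hM.1.det_eq_prod_eigenvalues
  have h2 : M.det = ((∏ i, hM.1.eigenvalues i : ℝ) : ℂ) := by push_cast [h1]; ring
  rw [h2, Complex.ofReal_re]
  exact Finset.prod_nonneg fun i _ => hM.eigenvalues_nonneg i

lemma real_smul_mat (r : ℝ) (M : Matrix n n ℂ) : r • M = (r : ℂ) • M := by
  ext i j; simp [Matrix.smul_apply, Complex.real_smul]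

lemma posDef_real_smul {r : ℝ} {M : Matrix n n ℂ} (hr : 0 < r) (hM : M.PosDef) :
    (r • M).PosDef := by
  rw [real_smul_mat]
  refine Matrix.PosDef.of_dotProduct_mulVec_pos ?_ ?_
  · unfold Matrix.IsHermitian
    rw [conjTranspose_smul, hM.1.eq]
    congr 1
    simp
  · intro x hx
    rw [Matrix.smul_mulVec, dotProduct_smul, smul_eq_mul]
    exact complex_smul_pos hr (hM.dotProduct_mulVec_pos hx)

lemma posSemidef_real_smul {r : ℝ} {M : Matrix n n ℂ} (hr : 0 ≤ r) (hM : M.PosSemidef) :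
    (r • M).PosSemidef := by
  rw [real_smul_mat]
  refine Matrix.PosSemidef.of_dotProduct_mulVec_nonneg ?_ ?_
  · unfold Matrix.IsHermitian
    rw [conjTranspose_smul, hM.1.eq]
    congr 1
    simp
  · intro x
    rw [Matrix.smul_mulVec, dotProduct_smul, smul_eq_mul]
    exact complex_smul_nonneg hr (hM.dotProduct_mulVec_nonneg x)

lemma posDef_conj_unit {M V : Matrix n n ℂ} (hM : M.PosDef) (hV : IsUnit V.det) :
    (V * M * Vᴴ).PosDef := by
  refine Matrix.PosDef.of_dotProduct_mulVec_pos ?_ ?_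
  · unfold Matrix.IsHermitian
    simp [conjTranspose_mul, hM.1.eq, Matrix.mul_assoc]
  · intro x hx
    have hy : Vᴴ *ᵥ x ≠ 0 := by
      intro h
      apply hx
      have hVH : IsUnit (Vᴴ) := by
        rw [Matrix.isUnit_iff_isUnit_det, det_conjTranspose]; exact hV.star
      have hinj := Matrix.mulVec_injective_iff_isUnit.mpr hVH
      exact hinj (by rw [h, Matrix.mulVec_zero])
    have key : star x ⬝ᵥ (V * M * Vᴴ) *ᵥ x
        = star (Vᴴ *ᵥ x) ⬝ᵥ M *ᵥ (Vᴴ *ᵥ x) := by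
      rw [star_mulVec, conjTranspose_conjTranspose, ← Matrix.mulVec_mulVec,
        ← Matrix.mulVec_mulVec, Matrix.dotProduct_mulVec (star x) V]
    rw [key]
    exact hM.dotProduct_mulVec_pos hy

lemma simul_diag {X Y : Matrix n n ℂ} (hX : X.PosDef) (hY : Y.PosDef) :
    ∃ (V : Matrix n n ℂ) (e : n → ℝ), IsUnit V.det ∧ (∀ k, 0 < e k) ∧
      X = V * Vᴴ ∧ Y = V * diagonal (fun k => (e k : ℂ)) * Vᴴ := by
  set U₁ : Matrix n n ℂ := (Matrix.IsHermitian.eigenvectorUnitary hX.1 : Matrix n n ℂ) with hU₁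
  have hU₁unit : U₁ * star U₁ = 1 :=
    (Matrix.mem_unitaryGroup_iff).mp (Matrix.IsHermitian.eigenvectorUnitary hX.1).2
  have hU₁unit' : star U₁ * U₁ = 1 :=
    (Matrix.mem_unitaryGroup_iff').mp (Matrix.IsHermitian.eigenvectorUnitary hX.1).2
  have hdetU₁ : IsUnit U₁.det :=
    IsUnit.of_mul_eq_one _ (by rw [← det_mul, hU₁unit, det_one])
  set ξ : n → ℝ := hX.1.eigenvalues with hξ
  have hξpos : ∀ k, 0 < ξ k := hX.eigenvalues_pos
  set s : n → ℝ := fun k => Real.sqrt (ξ k) with hs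
  have hspos : ∀ k, 0 < s k := fun k => Real.sqrt_pos.mpr (hξpos k)
  set V₁ : Matrix n n ℂ := U₁ * diagonal (fun k => (s k : ℂ)) with hV₁
  have hdetdiag : IsUnit (diagonal (fun k => (s k : ℂ))).det := by
    rw [det_diagonal]
    refine isUnit_iff_ne_zero.mpr (Finset.prod_ne_zero_iff.mpr fun k _ => ?_)
    exact_mod_cast (hspos k).ne'
  have hdetV₁ : IsUnit V₁.det := by rw [hV₁, det_mul]; exact hdetU₁.mul hdetdiag
  have hdiagH : (diagonal (fun k => (s k : ℂ)))ᴴ = diagonal (fun k => (s k : ℂ)) := by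
    ext i j
    by_cases h : i = j
    · subst h; simp [conjTranspose_apply, diagonal_apply_eq, Complex.conj_ofReal]
    · simp [conjTranspose_apply, diagonal_apply_ne, h, Ne.symm h]
  have hV₁H : V₁ᴴ = diagonal (fun k => (s k : ℂ)) * star U₁ := by
    rw [hV₁, conjTranspose_mul, star_eq_conjTranspose, hdiagH]
  have hXV₁ : X = V₁ * V₁ᴴ := by
    rw [hV₁H, hV₁, Matrix.mul_assoc, ← Matrix.mul_assoc (diagonal _), diagonal_mul_diagonal]
    have : (fun k => (s k : ℂ) * (s k : ℂ)) = (RCLike.ofReal ∘ ξ) := by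
      funext k
      simp only [Function.comp_apply]
      rw [← Complex.ofReal_mul, Real.mul_self_sqrt (hξpos k).le]
      rfl
    rw [this, ← Matrix.mul_assoc]
    exact hX.1.spectral_theorem
  -- M = V₁⁻¹ Y V₁⁻ᴴ
  have hdetV₁inv : IsUnit (V₁⁻¹).det := by
    rw [det_nonsing_inv]
    exact hdetV₁.ringInverse
  set M : Matrix n n ℂ := V₁⁻¹ * Y * (V₁⁻¹)ᴴ with hMdef
  have hM : M.PosDef := posDef_conj_unit hY hdetV₁inv
  set U₂ : Matrix n n ℂ := (Matrix.IsHermitian.eigenvectorUnitary hM.1 : Matrix n n ℂ) with hU₂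
  have hU₂unit : U₂ * star U₂ = 1 :=
    (Matrix.mem_unitaryGroup_iff).mp (Matrix.IsHermitian.eigenvectorUnitary hM.1).2
  have hdetU₂ : IsUnit U₂.det :=
    IsUnit.of_mul_eq_one _ (by rw [← det_mul, hU₂unit, det_one])
  set e : n → ℝ := hM.1.eigenvalues with he
  have hepos : ∀ k, 0 < e k := hM.eigenvalues_pos
  have hspec : M = U₂ * diagonal (fun k => (e k : ℂ)) * star U₂ := by
    have := hM.1.spectral_theorem
    exact this
  refine ⟨V₁ * U₂, e, ?_, hepos, ?_, ?_⟩
  · rw [det_mul]; exact hdetV₁.mul hdetU₂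
  · rw [conjTranspose_mul, Matrix.mul_assoc, ← Matrix.mul_assoc U₂,
      ← star_eq_conjTranspose U₂, hU₂unit, Matrix.one_mul, ← hXV₁]
  · rw [conjTranspose_mul]
    symm
    calc V₁ * U₂ * diagonal (fun k => (e k : ℂ)) * (U₂ᴴ * V₁ᴴ)
        = V₁ * (U₂ * diagonal (fun k => (e k : ℂ)) * star U₂) * V₁ᴴ := by
          rw [star_eq_conjTranspose]; noncomm_ring [Matrix.mul_assoc]
      _ = V₁ * M * V₁ᴴ := by rw [← hspec]
      _ = (V₁ * V₁⁻¹) * Y * ((V₁⁻¹)ᴴ * V₁ᴴ) := by rw [hMdef]; noncomm_ring [Matrix.mul_assoc]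
      _ = Y := by
          rw [Matrix.mul_nonsing_inv _ hdetV₁, ← conjTranspose_mul,
            Matrix.mul_nonsing_inv _ hdetV₁]
          simp

noncomputable def subdetC (B : Matrix n n ℂ) (s : Finset n) : ℂ :=
  (B.submatrix (fun i : {a : n // a ∉ s} => (i : n)) (fun i : {a : n // a ∉ s} => (i : n))).det

lemma subdetC_univ (B : Matrix n n ℂ) : subdetC B Finset.univ = 1 := by
  haveI : IsEmpty {a : n // a ∉ (Finset.univ : Finset n)} :=
    ⟨fun x => x.2 (Finset.mem_univ _)⟩
  exact Matrix.det_isEmpty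

lemma det_piecewise_one (B : Matrix n n ℂ) (s : Finset n) :
    (Matrix.of (s.piecewise (1 : Matrix n n ℂ) B)).det = subdetC B s := by
  classical
  set e := Equiv.sumCompl (fun a : n => a ∈ s) with he
  set m : Matrix n n ℂ := Matrix.of (s.piecewise (1 : Matrix n n ℂ) B) with hm
  have key : m.submatrix e e =
      fromBlocks 1 0
        (B.submatrix (fun i : {a : n // a ∉ s} => (i : n)) (fun i : {a : n // a ∈ s} => (i : n)))
        (B.submatrix (fun i : {a : n // a ∉ s} => (i : n)) (fun i : {a : n // a ∉ s} => (i : n))) := by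
    ext i j
    cases i with
    | inl a =>
      have ha : (a : n) ∈ s := a.2
      cases j with
      | inl b =>
        simp only [submatrix_apply, he, Equiv.sumCompl_apply_inl, hm, Matrix.of_apply,
          Finset.piecewise, ha, if_true, fromBlocks_apply₁₁]
        by_cases hab : a = b
        · subst hab; simp [Matrix.one_apply]
        · rw [Matrix.one_apply_ne hab, Matrix.one_apply_ne (fun h : (a:n) = (b:n) =>
            hab (Subtype.ext h))]
      | inr b =>
        have hb : (b : n) ∉ s := b.2
        simp only [submatrix_apply, he, Equiv.sumCompl_apply_inl, Equiv.sumCompl_apply_inr, hm,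
          Matrix.of_apply, Finset.piecewise, ha, if_true, fromBlocks_apply₁₂]
        rw [Matrix.one_apply_ne (fun h : (a:n) = (b:n) => hb (h ▸ ha))]
        rfl
    | inr a =>
      have ha : (a : n) ∉ s := a.2
      cases j with
      | inl b =>
        simp [submatrix_apply, he, hm, Finset.piecewise, ha]
      | inr b =>
        simp [submatrix_apply, he, hm, Finset.piecewise, ha]
  have h1 : (m.submatrix e e).det = m.det := det_submatrix_equiv_self e m
  rw [← h1, key, det_fromBlocks_zero₁₂, det_one, one_mul]
  rfl

lemma det_diagonal_add (c : n → ℂ) (B : Matrix n n ℂ) :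
    (diagonal c + B).det = ∑ s : Finset n, (∏ k ∈ s, c k) * subdetC B s := by
  classical
  set f := (Matrix.detRowAlternating : (n → ℂ) [⋀^n]→ₗ[ℂ] ℂ).toMultilinearMap with hf
  have hfdet : ∀ M : Matrix n n ℂ, f M = M.det := fun _ => rfl
  have h0 : (diagonal c + B).det = f ((diagonal c : n → n → ℂ) + (B : n → n → ℂ)) := rfl
  refine h0.trans ((f.map_add_univ (diagonal c : n → n → ℂ) (B : n → n → ℂ)).trans ?_)
  refine Finset.sum_congr rfl fun s _ => ?_
  set m : n → n → ℂ := s.piecewise (1 : Matrix n n ℂ) B with hm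
  have hpc : s.piecewise (diagonal c : n → n → ℂ) (B : n → n → ℂ)
      = s.piecewise (fun i => c i • m i) m := by
    funext i
    by_cases hi : i ∈ s
    · simp only [Finset.piecewise, hi, if_true, hm]
      funext j
      simp [diagonal_apply, Matrix.one_apply, mul_ite]
    · simp only [Finset.piecewise, hi, if_false, hm]
  rw [hpc, f.map_piecewise_smul, smul_eq_mul]
  congr 1
  have : f m = (Matrix.of m).det := rfl
  rw [this, det_piecewise_one]

lemma det_diagonal_add_re (c : n → ℝ) (B : Matrix n n ℂ) :
    ((diagonal (fun k => (c k : ℂ)) + B).det).re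
      = ∑ s : Finset n, (∏ k ∈ s, c k) * (subdetC B s).re := by
  rw [det_diagonal_add, Complex.re_sum]
  refine Finset.sum_congr rfl fun s _ => ?_
  have : (∏ k ∈ s, ((c k : ℂ))) = ((∏ k ∈ s, c k : ℝ) : ℂ) := by push_cast; ring
  rw [this, Complex.re_ofReal_mul]

lemma hoelder_two {ι : Type*} [Fintype ι] (α β : ι → ℝ)
    (hα : ∀ i, 0 ≤ α i) (hβ : ∀ i, 0 ≤ β i) {a b : ℝ}
    (ha : 0 < a) (hb : 0 < b) (hab : a + b = 1)
    (hSα : 0 < ∑ i, α i) (hSβ : 0 < ∑ i, β i) :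
    ∑ i, (α i) ^ a * (β i) ^ b ≤ (∑ i, α i) ^ a * (∑ i, β i) ^ b := by
  set Sα := ∑ i, α i with hSa
  set Sβ := ∑ i, β i with hSb
  have key : ∀ i, (α i) ^ a * (β i) ^ b
      ≤ (Sα ^ a * Sβ ^ b) * (a * (α i / Sα) + b * (β i / Sβ)) := by
    intro i
    have h1 : α i ^ a = Sα ^ a * (α i / Sα) ^ a := by
      rw [← Real.mul_rpow hSα.le (div_nonneg (hα i) hSα.le)]
      congr 1
      field_simp
    have h2 : β i ^ b = Sβ ^ b * (β i / Sβ) ^ b := by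
      rw [← Real.mul_rpow hSβ.le (div_nonneg (hβ i) hSβ.le)]
      congr 1
      field_simp
    rw [h1, h2]
    have hgm : (α i / Sα) ^ a * (β i / Sβ) ^ b ≤ a * (α i / Sα) + b * (β i / Sβ) :=
      Real.geom_mean_le_arith_mean2_weighted ha.le hb.le
        (div_nonneg (hα i) hSα.le) (div_nonneg (hβ i) hSβ.le) hab
    calc Sα ^ a * (α i / Sα) ^ a * (Sβ ^ b * (β i / Sβ) ^ b)
        = (Sα ^ a * Sβ ^ b) * ((α i / Sα) ^ a * (β i / Sβ) ^ b) := by ring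
      _ ≤ (Sα ^ a * Sβ ^ b) * (a * (α i / Sα) + b * (β i / Sβ)) := by
          exact mul_le_mul_of_nonneg_left hgm
            (mul_nonneg (Real.rpow_nonneg hSα.le a) (Real.rpow_nonneg hSβ.le b))
  calc ∑ i, (α i) ^ a * (β i) ^ b
      ≤ ∑ i, (Sα ^ a * Sβ ^ b) * (a * (α i / Sα) + b * (β i / Sβ)) :=
        Finset.sum_le_sum fun i _ => key i
    _ = (Sα ^ a * Sβ ^ b) * (a * (Sα / Sα) + b * (Sβ / Sβ)) := by
        rw [← Finset.mul_sum]
        congr 1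
        rw [Finset.sum_add_distrib, ← Finset.mul_sum, ← Finset.mul_sum,
          ← Finset.sum_div, ← Finset.sum_div]
    _ = Sα ^ a * Sβ ^ b := by
        rw [div_self hSα.ne', div_self hSβ.ne', mul_one, mul_one, hab, mul_one]

noncomputable def gfun (A M : Matrix n n ℂ) : ℝ :=
  Real.log ((M + A).det.re) - Real.log (M.det.re)

lemma diag_ineq {B : Matrix n n ℂ} (hB : B.PosSemidef) (e : n → ℝ) (he : ∀ k, 0 < e k)
    {a b : ℝ} (ha : 0 < a) (hb : 0 < b) (hab : a + b = 1) :
    gfun B (diagonal (fun k => ((a + b * e k : ℝ) : ℂ)))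
      ≤ a * gfun B (diagonal (fun k : n => ((1 : ℝ) : ℂ)))
        + b * gfun B (diagonal (fun k => ((e k : ℝ) : ℂ))) := by
  classical
  set m : Finset n → ℝ := fun s => (subdetC B s).re with hm
  have hm0 : ∀ s, 0 ≤ m s := fun s =>
    posSemidef_det_re_nonneg (hB.submatrix _)
  set cab : n → ℝ := fun k => a + b * e k with hcab
  have hcabpos : ∀ k, 0 < cab k := fun k =>
    add_pos ha (mul_pos hb (he k))
  -- determinant of the diagonal part
  have hddet : ∀ c : n → ℝ, ((diagonal (fun k => (c k : ℂ))).det).re = ∏ k, c k := by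
    intro c
    rw [det_diagonal, show (∏ k, ((c k : ℝ) : ℂ)) = ((∏ k, c k : ℝ) : ℂ) by push_cast; ring,
      Complex.ofReal_re]
  -- positivity of dets
  have hPDpos : ∀ c : n → ℝ, (∀ k, 0 < c k) →
      0 < ((diagonal (fun k => (c k : ℂ)) + B).det).re := by
    intro c hc
    refine posDef_det_re_pos (Matrix.PosDef.add_posSemidef ?_ hB)
    refine (Matrix.posDef_diagonal_iff).mpr fun i => ?_
    exact_mod_cast Complex.zero_lt_real.mpr (hc i)
  set Pa := ((diagonal (fun k => ((cab k : ℝ) : ℂ)) + B).det).re with hPa_def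
  set P1 := ((diagonal (fun k : n => ((1 : ℝ) : ℂ)) + B).det).re with hP1_def
  set Pe := ((diagonal (fun k => ((e k : ℝ) : ℂ)) + B).det).re with hPe_def
  have hPa : 0 < Pa := hPDpos cab hcabpos
  have hP1 : 0 < P1 := hPDpos (fun _ => 1) (fun _ => one_pos)
  have hPe : 0 < Pe := hPDpos e he
  set E := ∏ k, e k with hE_def
  set Ea := ∏ k, cab k with hEa_def
  have hE : 0 < E := Finset.prod_pos fun k _ => he k
  have hEa : 0 < Ea := Finset.prod_pos fun k _ => hcabpos k
  -- expansions
  have hPa_exp : Pa = ∑ s : Finset n, (∏ k ∈ s, cab k) * m s := det_diagonal_add_re cab B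
  have hP1_exp : P1 = ∑ s : Finset n, m s := by
    rw [hP1_def, det_diagonal_add_re (fun _ => 1) B]
    simp
    rfl
  have hPe_exp : Pe = ∑ s : Finset n, (∏ k ∈ s, e k) * m s := det_diagonal_add_re e B
  have hβ0 : ∀ s : Finset n, 0 ≤ (∏ k ∈ s, e k) / E * m s := fun s =>
    mul_nonneg (div_nonneg (Finset.prod_nonneg fun k _ => (he k).le) hE.le) (hm0 s)
  have hSuma : ∑ s : Finset n, m s = P1 := hP1_exp.symm
  have hSumb : ∑ s : Finset n, (∏ k ∈ s, e k) / E * m s = Pe / E := by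
    rw [hPe_exp, Finset.sum_div]
    refine Finset.sum_congr rfl fun s _ => ?_
    rw [div_mul_eq_mul_div]
  -- pointwise claim
  have claim1 : ∀ s : Finset n, (∏ k ∈ s, cab k) * m s
      ≤ Ea * (m s ^ a * ((∏ k ∈ s, e k) / E * m s) ^ b) := by
    intro s
    have hprod_e_pos : 0 < ∏ k ∈ s, e k := Finset.prod_pos fun k _ => he k
    have hprod_cab_pos : 0 < ∏ k ∈ s, cab k := Finset.prod_pos fun k _ => hcabpos k
    have hcompl_cab_pos : 0 < ∏ k ∈ sᶜ, cab k := Finset.prod_pos fun k _ => hcabpos k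
    have hcompl_e_pos : 0 < ∏ k ∈ sᶜ, e k := Finset.prod_pos fun k _ => he k
    have hpoint : (∏ k ∈ sᶜ, e k) ^ b ≤ ∏ k ∈ sᶜ, cab k := by
      rw [← Real.finset_prod_rpow _ _ (fun k _ => (he k).le)]
      refine Finset.prod_le_prod (fun k _ => Real.rpow_nonneg (he k).le b) fun k _ => ?_
      have := Real.geom_mean_le_arith_mean2_weighted ha.le hb.le zero_le_one (he k).le hab
      rw [Real.one_rpow, one_mul, mul_one] at this
      exact this
    have prodkey : (∏ k ∈ s, cab k) ≤ Ea * ((∏ k ∈ s, e k) / E) ^ b := by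
      have hratio : (∏ k ∈ s, e k) / E = (∏ k ∈ sᶜ, e k)⁻¹ := by
        rw [hE_def, ← Finset.prod_mul_prod_compl s e]
        field_simp
      rw [hratio, Real.inv_rpow hcompl_e_pos.le, hEa_def, ← Finset.prod_mul_prod_compl s cab]
      have h1 : (1 : ℝ) ≤ (∏ k ∈ sᶜ, cab k) * ((∏ k ∈ sᶜ, e k) ^ b)⁻¹ := by
        rw [← div_eq_mul_inv]
        exact (one_le_div (Real.rpow_pos_of_pos hcompl_e_pos b)).mpr hpoint
      calc (∏ k ∈ s, cab k) = (∏ k ∈ s, cab k) * 1 := by ring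
        _ ≤ (∏ k ∈ s, cab k) * ((∏ k ∈ sᶜ, cab k) * ((∏ k ∈ sᶜ, e k) ^ b)⁻¹) :=
            mul_le_mul_of_nonneg_left h1 hprod_cab_pos.le
        _ = (∏ k ∈ s, cab k) * (∏ k ∈ sᶜ, cab k) * ((∏ k ∈ sᶜ, e k) ^ b)⁻¹ := by ring
    rcases eq_or_lt_of_le (hm0 s) with hms | hms
    · rw [← hms]
      simp [Real.zero_rpow ha.ne']
    · have hαβ : m s ^ a * ((∏ k ∈ s, e k) / E * m s) ^ b
          = m s * (((∏ k ∈ s, e k) / E) ^ b) := by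
        rw [Real.mul_rpow (div_nonneg hprod_e_pos.le hE.le) (hm0 s)]
        have h2 : m s ^ a * (((∏ k ∈ s, e k) / E) ^ b * m s ^ b)
            = (m s ^ a * m s ^ b) * ((∏ k ∈ s, e k) / E) ^ b := by ring
        rw [h2, ← Real.rpow_add hms, hab, Real.rpow_one]
      rw [hαβ]
      calc (∏ k ∈ s, cab k) * m s
          ≤ (Ea * ((∏ k ∈ s, e k) / E) ^ b) * m s :=
            mul_le_mul_of_nonneg_right prodkey (hm0 s)
        _ = Ea * (m s * ((∏ k ∈ s, e k) / E) ^ b) := by ring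
  -- main multiplicative bound
  have hmain : Pa ≤ Ea * (P1 ^ a * (Pe / E) ^ b) := by
    calc Pa = ∑ s : Finset n, (∏ k ∈ s, cab k) * m s := hPa_exp
      _ ≤ ∑ s : Finset n, Ea * (m s ^ a * ((∏ k ∈ s, e k) / E * m s) ^ b) :=
          Finset.sum_le_sum fun s _ => claim1 s
      _ = Ea * ∑ s : Finset n, m s ^ a * ((∏ k ∈ s, e k) / E * m s) ^ b := by
          rw [Finset.mul_sum]
      _ ≤ Ea * ((∑ s : Finset n, m s) ^ a * (∑ s : Finset n, (∏ k ∈ s, e k) / E * m s) ^ b) := by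
          refine mul_le_mul_of_nonneg_left ?_ hEa.le
          exact hoelder_two m (fun s => (∏ k ∈ s, e k) / E * m s) hm0 hβ0 ha hb hab
            (hSuma ▸ hP1) (hSumb ▸ (div_pos hPe hE))
      _ = Ea * (P1 ^ a * (Pe / E) ^ b) := by rw [hSuma, hSumb]
  -- logarithms
  have hlog : Real.log Pa ≤ Real.log Ea + (a * Real.log P1 + b * (Real.log Pe - Real.log E)) := by
    have h1 := Real.log_le_log hPa hmain
    rw [Real.log_mul hEa.ne' (by positivity), Real.log_mul (by positivity) (by positivity),
      Real.log_rpow hP1, Real.log_rpow (div_pos hPe hE), Real.log_div hPe.ne' hE.ne'] at h1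
    linarith
  -- final assembly
  unfold gfun
  rw [hddet, hddet, hddet]
  simp only [Finset.prod_const_one, Real.log_one]
  have hEa_eq : (∏ k, (a + b * e k)) = Ea := rfl
  rw [hEa_eq]
  rw [← hPa_def, ← hP1_def, ← hPe_def, ← hE_def]
  linarith

lemma logdet_conj_eq {V A B N : Matrix n n ℂ} (hV : IsUnit V.det) (hAB : A = V * B * Vᴴ)
    (hN : N.PosDef) (hNB : (N + B).PosDef) :
    gfun A (V * N * Vᴴ) = gfun B N := by
  have hsum : V * N * Vᴴ + A = V * (N + B) * Vᴴ := by rw [hAB]; noncomm_ring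
  have hdet : ∀ M : Matrix n n ℂ, (V * M * Vᴴ).det = (Complex.normSq V.det : ℂ) * M.det := by
    intro M
    rw [det_mul, det_mul, det_conjTranspose]
    calc V.det * M.det * star V.det = V.det * star V.det * M.det := by ring
      _ = (Complex.normSq V.det : ℂ) * M.det := by
          rw [show star V.det = (starRingEnd ℂ) V.det from rfl, Complex.mul_conj]
  have hVdet : V.det ≠ 0 := by
    intro h
    rw [h] at hV
    exact not_isUnit_zero hV
  have hnsq : 0 < Complex.normSq V.det := Complex.normSq_pos.mpr hVdet
  have hre : ∀ M : Matrix n n ℂ, ((V * M * Vᴴ).det).re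
      = Complex.normSq V.det * (M.det).re := by
    intro M
    rw [hdet, Complex.re_ofReal_mul]
  unfold gfun
  rw [hsum, hre, hre, Real.log_mul hnsq.ne' (posDef_det_re_pos hNB).ne',
    Real.log_mul hnsq.ne' (posDef_det_re_pos hN).ne']
  ring

lemma two_point {A : Matrix n n ℂ} (hA : A.PosSemidef) {X Y : Matrix n n ℂ}
    (hX : X.PosDef) (hY : Y.PosDef) {a b : ℝ} (ha : 0 < a) (hb : 0 < b) (hab : a + b = 1) :
    gfun A (a • X + b • Y) ≤ a * gfun A X + b * gfun A Y := by
  obtain ⟨V, e, hV, he, hXe, hYe⟩ := simul_diag hX hY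
  set B : Matrix n n ℂ := V⁻¹ * A * (V⁻¹)ᴴ with hBdef
  have hB : B.PosSemidef := hA.mul_mul_conjTranspose_same V⁻¹
  have hVV : V * V⁻¹ = 1 := Matrix.mul_nonsing_inv V hV
  have hVHV : (V⁻¹)ᴴ * Vᴴ = 1 := by rw [← conjTranspose_mul, hVV, conjTranspose_one]
  have hAB : A = V * B * Vᴴ := by
    rw [hBdef]
    calc A = (V * V⁻¹) * A * ((V⁻¹)ᴴ * Vᴴ) := by rw [hVV, hVHV]; simp
      _ = V * (V⁻¹ * A * (V⁻¹)ᴴ) * Vᴴ := by noncomm_ring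
  -- diagonal matrices
  have hD1 : (diagonal (fun _ : n => ((1 : ℝ) : ℂ))) = (1 : Matrix n n ℂ) := by
    rw [show (fun _ : n => ((1 : ℝ) : ℂ)) = fun _ : n => (1 : ℂ) by push_cast; rfl,
      diagonal_one]
  have hX1 : X = V * diagonal (fun _ : n => ((1 : ℝ) : ℂ)) * Vᴴ := by
    rw [hD1, Matrix.mul_one]; exact hXe
  have hcomb : a • X + b • Y = V * diagonal (fun k => ((a + b * e k : ℝ) : ℂ)) * Vᴴ := by
    have hDsplit : diagonal (fun k => ((a + b * e k : ℝ) : ℂ))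
        = (a : ℂ) • (1 : Matrix n n ℂ) + (b : ℂ) • diagonal (fun k => (e k : ℂ)) := by
      ext i j
      by_cases h : i = j
      · subst h
        simp only [diagonal_apply_eq, Matrix.add_apply, Matrix.smul_apply,
          Matrix.one_apply_eq, smul_eq_mul]
        push_cast
        ring
      · simp [diagonal_apply_ne _ h, Matrix.one_apply_ne h]
    rw [hDsplit, Matrix.mul_add, Matrix.add_mul, mul_smul_comm, mul_smul_comm,
      smul_mul_assoc, smul_mul_assoc, Matrix.mul_one, ← hXe, ← hYe,
      real_smul_mat a X, real_smul_mat b Y]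
  -- positive-definiteness side conditions
  have hpdDiag : ∀ c : n → ℝ, (∀ k, 0 < c k) → (diagonal (fun k => (c k : ℂ))).PosDef :=
    fun c hc => (Matrix.posDef_diagonal_iff).mpr fun i => by
      exact_mod_cast Complex.zero_lt_real.mpr (hc i)
  have hD1pd : (diagonal (fun _ : n => ((1 : ℝ) : ℂ))).PosDef := hpdDiag _ fun _ => one_pos
  have hDepd : (diagonal (fun k => ((e k : ℝ) : ℂ))).PosDef := hpdDiag _ he
  have hDabpd : (diagonal (fun k => ((a + b * e k : ℝ) : ℂ))).PosDef :=
    hpdDiag _ fun k => add_pos ha (mul_pos hb (he k))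
  rw [hcomb, hX1, hYe,
    logdet_conj_eq hV hAB hDabpd (hDabpd.add_posSemidef hB),
    logdet_conj_eq hV hAB hD1pd (hD1pd.add_posSemidef hB),
    logdet_conj_eq hV hAB hDepd (hDepd.add_posSemidef hB)]
  exact diag_ineq hB e he ha hb hab

lemma gfun_convexOn {A : Matrix n n ℂ} (hA : A.PosSemidef) :
    ConvexOn ℝ {M : Matrix n n ℂ | M.PosDef} (gfun A) := by
  constructor
  · intro X hX Y hY a b ha hb hab
    simp only [Set.mem_setOf_eq] at *
    rcases eq_or_lt_of_le ha with ha0 | ha0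
    · have hb1 : b = 1 := by linarith
      rw [← ha0, hb1, zero_smul, one_smul, zero_add]
      exact hY
    · rcases eq_or_lt_of_le hb with hb0 | hb0
      · have ha1 : a = 1 := by linarith
        rw [← hb0, ha1, zero_smul, one_smul, add_zero]
        exact hX
      · exact (posDef_real_smul ha0 hX).add_posSemidef
          (posSemidef_real_smul hb hY.posSemidef)
  · intro X hX Y hY a b ha hb hab
    simp only [Set.mem_setOf_eq] at hX hY
    rcases eq_or_lt_of_le ha with ha0 | ha0
    · have hb1 : b = 1 := by linarith
      rw [← ha0, hb1]
      simp
    · rcases eq_or_lt_of_le hb with hb0 | hb0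
      · have ha1 : a = 1 := by linarith
        rw [← hb0, ha1]
        simp
      · simpa [smul_eq_mul] using two_point hA hX hY ha0 hb0 hab

lemma gfun_jensen {A : Matrix n n ℂ} (hA : A.PosSemidef) {d : ℕ}
    (X : Fin d → Matrix n n ℂ) (hX : ∀ i, (X i).PosDef)
    (w : Fin d → ℝ) (hw : ∀ i, 0 ≤ w i) (hsum : ∑ i, w i = 1) :
    gfun A (∑ i, w i • X i) ≤ ∑ i, w i * gfun A (X i) := by
  have := (gfun_convexOn hA).map_sum_le (t := Finset.univ)
    (fun i _ => hw i) hsum (fun i _ => hX i)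
  simpa [smul_eq_mul] using this

lemma posSemidef_diag_entry {S : Matrix m m ℂ} (hS : S.PosSemidef) (p : m) :
    0 ≤ S p p := by
  have h := hS.dotProduct_mulVec_nonneg (Pi.single p 1)
  have hx : star (Pi.single p (1:ℂ)) ⬝ᵥ S *ᵥ Pi.single p 1 = S p p := by
    rw [Matrix.mulVec_single]
    simp [dotProduct, Pi.single_apply, apply_ite]
  rwa [hx] at h

lemma psd_entry_bound {S : Matrix m m ℂ} (hS : S.PosSemidef) {P : ℝ}
    (htr : S.trace.re ≤ P) (p q : m) : ‖S p q‖ ≤ P := by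
  have hdiag : ∀ r, 0 ≤ (S r r).re ∧ (S r r).im = 0 := by
    intro r
    have := posSemidef_diag_entry hS r
    rw [Complex.le_def] at this
    exact ⟨this.1, this.2.symm⟩
  have htrace_re : S.trace.re = ∑ r, (S r r).re := by
    rw [Matrix.trace, Complex.re_sum]
    rfl
  have hdle : ∀ r, (S r r).re ≤ P := by
    intro r
    refine le_trans ?_ htr
    rw [htrace_re]
    exact Finset.single_le_sum (fun i _ => (hdiag i).1) (Finset.mem_univ r)
  have hP0 : 0 ≤ P := le_trans (hdiag p).1 (hdle p)
  -- 2x2 principal submatrix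
  set T : Matrix (Fin 2) (Fin 2) ℂ := S.submatrix ![p, q] ![p, q] with hT
  have hTpsd : T.PosSemidef := hS.submatrix _
  have hTdet : (T.det).re = (S p p).re * (S q q).re - Complex.normSq (S p q) := by
    have h00 : T 0 0 = S p p := rfl
    have h01 : T 0 1 = S p q := rfl
    have h10 : T 1 0 = S q p := rfl
    have h11 : T 1 1 = S q q := rfl
    have hqp : S q p = star (S p q) := by
      conv_lhs => rw [← hS.1]
      rfl
    rw [det_fin_two, h00, h01, h10, h11, hqp,
      show S p q * star (S p q) = ((Complex.normSq (S p q) : ℝ) : ℂ) by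
        rw [show star (S p q) = (starRingEnd ℂ) (S p q) from rfl, Complex.mul_conj],
      Complex.sub_re, Complex.mul_re, (hdiag p).2, (hdiag q).2, Complex.ofReal_re]
    ring
  have hdet0 : 0 ≤ (T.det).re := by
    have h1 : T.det = ∏ i, (hTpsd.1.eigenvalues i : ℂ) := hTpsd.1.det_eq_prod_eigenvalues
    have h2 : T.det = ((∏ i, hTpsd.1.eigenvalues i : ℝ) : ℂ) := by push_cast [h1]; ring
    rw [h2, Complex.ofReal_re]
    exact Finset.prod_nonneg fun i _ => hTpsd.eigenvalues_nonneg i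
  have hnsq : Complex.normSq (S p q) ≤ P * P := by
    have := hTdet ▸ hdet0
    nlinarith [(hdiag p).1, (hdiag q).1, hdle p, hdle q]
  have hnrm : ‖S p q‖ ^ 2 = Complex.normSq (S p q) := by
    rw [Complex.sq_norm]
  nlinarith [norm_nonneg (S p q), hnrm]

lemma det_norm_le {M : Matrix n n ℂ} {mx : ℝ} (hmx : ∀ i j, ‖M i j‖ ≤ mx) :
    ‖M.det‖ ≤ (Fintype.card (Equiv.Perm n)) * mx ^ (Fintype.card n) := by
  cases isEmpty_or_nonempty n with
  | inl h =>
    rw [Matrix.det_isEmpty, Fintype.card_perm]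
    simp [Fintype.card_eq_zero]
  | inr h =>
    have hmx0 : 0 ≤ mx :=
      le_trans (norm_nonneg _) (hmx (Classical.arbitrary n) (Classical.arbitrary n))
    rw [Matrix.det_apply]
    refine (norm_sum_le _ _).trans ?_
    have hterm : ∀ σ : Equiv.Perm n,
        ‖Equiv.Perm.sign σ • ∏ i, M (σ i) i‖ ≤ mx ^ (Fintype.card n) := by
      intro σ
      have hsgn : ‖((Equiv.Perm.sign σ : ℤ) : ℂ)‖ = 1 := by
        rcases Int.units_eq_one_or (Equiv.Perm.sign σ) with h | h <;> rw [h] <;> simp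
      rw [Units.smul_def, zsmul_eq_mul, norm_mul, hsgn, one_mul]
      calc ‖∏ i, M (σ i) i‖ = ∏ i, ‖M (σ i) i‖ := norm_prod _ _
        _ ≤ ∏ _i : n, mx := Finset.prod_le_prod (fun i _ => norm_nonneg _)
            (fun i _ => hmx _ _)
        _ = mx ^ (Fintype.card n) := by rw [Finset.prod_const, Finset.card_univ]
    calc ∑ σ : Equiv.Perm n, ‖Equiv.Perm.sign σ • ∏ i, M (σ i) i‖
        ≤ ∑ _σ : Equiv.Perm n, mx ^ (Fintype.card n) :=
          Finset.sum_le_sum fun σ _ => hterm σ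
      _ = (Fintype.card (Equiv.Perm n)) * mx ^ (Fintype.card n) := by
          rw [Finset.sum_const, Finset.card_univ, nsmul_eq_mul]

lemma log_le_abs (y : ℝ) : Real.log y ≤ |y| := by
  rcases lt_trichotomy y 0 with h | h | h
  · have hlg : Real.log y = Real.log (-y) := by rw [Real.log_neg_eq_log]
    rw [hlg]
    calc Real.log (-y) ≤ (-y) - 1 := Real.log_le_sub_one_of_pos (by linarith)
      _ ≤ |y| := by rw [abs_of_neg h]; linarith
  · simp [h]
  · calc Real.log y ≤ y - 1 := Real.log_le_sub_one_of_pos h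
      _ ≤ |y| := by rw [abs_of_pos h]; linarith

lemma rate_bound (C : Matrix n n ℂ) (Hm : Matrix n m ℂ) {P : ℝ} (hP : 0 ≤ P) :
    ∃ Bd : ℝ, ∀ SI : Matrix m m ℂ, SI.PosSemidef → SI.trace.re ≤ P →
      Real.logb 2 ((1 + C * (Hm * SI * Hmᴴ)).det.re) ≤ Bd := by
  classical
  set cH : ℝ := ∑ l : n, ∑ p : m, ‖Hm l p‖ with hcH
  set cC : ℝ := ∑ j : n, ∑ l : n, ‖C j l‖ with hcC
  have hcH0 : 0 ≤ cH := Finset.sum_nonneg fun l _ =>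
    Finset.sum_nonneg fun p _ => norm_nonneg _
  have hcC0 : 0 ≤ cC := Finset.sum_nonneg fun j _ =>
    Finset.sum_nonneg fun l _ => norm_nonneg _
  have hrowH : ∀ l : n, ∑ p : m, ‖Hm l p‖ ≤ cH := by
    intro l
    exact Finset.single_le_sum
      (f := fun l => ∑ p : m, ‖Hm l p‖)
      (fun i _ => Finset.sum_nonneg fun p _ => norm_nonneg _) (Finset.mem_univ l)
  have hrowC : ∀ j : n, ∑ l : n, ‖C j l‖ ≤ cC := by
    intro j
    exact Finset.single_le_sum
      (f := fun j => ∑ l : n, ‖C j l‖)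
      (fun i _ => Finset.sum_nonneg fun l _ => norm_nonneg _) (Finset.mem_univ j)
  set mx : ℝ := 1 + cC * (P * cH * cH) with hmx
  refine ⟨(Fintype.card (Equiv.Perm n)) * mx ^ (Fintype.card n) / Real.log 2, ?_⟩
  intro SI hSI htr
  have hent : ∀ p q, ‖SI p q‖ ≤ P := psd_entry_bound hSI htr
  -- entry bound on H SI Hᴴ
  have hW : ∀ l k, ‖(Hm * SI * Hmᴴ) l k‖ ≤ P * cH * cH := by
    intro l k
    have h1 : ∀ q, ‖(Hm * SI) l q‖ ≤ P * ∑ p, ‖Hm l p‖ := by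
      intro q
      rw [Matrix.mul_apply]
      refine (norm_sum_le _ _).trans ?_
      rw [Finset.mul_sum]
      refine Finset.sum_le_sum fun p _ => ?_
      rw [norm_mul, mul_comm (P : ℝ) _]
      exact mul_le_mul_of_nonneg_left (hent p q) (norm_nonneg _)
    rw [Matrix.mul_apply]
    refine (norm_sum_le _ _).trans ?_
    calc ∑ q, ‖(Hm * SI) l q * Hmᴴ q k‖
        = ∑ q, ‖(Hm * SI) l q‖ * ‖Hm k q‖ := by
          refine Finset.sum_congr rfl fun q _ => ?_
          rw [norm_mul, Matrix.conjTranspose_apply, norm_star]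
      _ ≤ ∑ q, (P * ∑ p, ‖Hm l p‖) * ‖Hm k q‖ :=
          Finset.sum_le_sum fun q _ =>
            mul_le_mul_of_nonneg_right (h1 q) (norm_nonneg _)
      _ = (P * ∑ p, ‖Hm l p‖) * ∑ q, ‖Hm k q‖ := by rw [← Finset.mul_sum]
      _ ≤ (P * cH) * cH := by
          refine mul_le_mul ?_ (hrowH k) (Finset.sum_nonneg fun q _ => norm_nonneg _)
            (by positivity)
          exact mul_le_mul_of_nonneg_left (hrowH l) hP
      _ = P * cH * cH := by ring
  have hentry : ∀ j k, ‖((1 + C * (Hm * SI * Hmᴴ) : Matrix n n ℂ)) j k‖ ≤ mx := by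
    intro j k
    have h2 : ‖(C * (Hm * SI * Hmᴴ)) j k‖ ≤ cC * (P * cH * cH) := by
      rw [Matrix.mul_apply]
      refine (norm_sum_le _ _).trans ?_
      calc ∑ l, ‖C j l * (Hm * SI * Hmᴴ) l k‖
          = ∑ l, ‖C j l‖ * ‖(Hm * SI * Hmᴴ) l k‖ := by
            refine Finset.sum_congr rfl fun l _ => norm_mul _ _
        _ ≤ ∑ l, ‖C j l‖ * (P * cH * cH) :=
            Finset.sum_le_sum fun l _ =>
              mul_le_mul_of_nonneg_left (hW l k) (norm_nonneg _)
        _ = (∑ l, ‖C j l‖) * (P * cH * cH) := by rw [← Finset.sum_mul]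
        _ ≤ cC * (P * cH * cH) := by
            refine mul_le_mul_of_nonneg_right (hrowC j) (by positivity)
    have h1 : ‖(1 : Matrix n n ℂ) j k‖ ≤ 1 := by
      by_cases h : j = k
      · subst h; rw [Matrix.one_apply_eq]; simp
      · rw [Matrix.one_apply_ne h]; simp
    calc ‖((1 + C * (Hm * SI * Hmᴴ) : Matrix n n ℂ)) j k‖
        ≤ ‖(1 : Matrix n n ℂ) j k‖ + ‖(C * (Hm * SI * Hmᴴ)) j k‖ := by
          rw [Matrix.add_apply]; exact norm_add_le _ _
      _ ≤ 1 + cC * (P * cH * cH) := add_le_add h1 h2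
  have hdet : ‖(1 + C * (Hm * SI * Hmᴴ)).det‖
      ≤ (Fintype.card (Equiv.Perm n)) * mx ^ (Fintype.card n) := det_norm_le hentry
  have hre : |(1 + C * (Hm * SI * Hmᴴ)).det.re| ≤ ‖(1 + C * (Hm * SI * Hmᴴ)).det‖ :=
    Complex.abs_re_le_norm _
  have hlog : Real.log ((1 + C * (Hm * SI * Hmᴴ)).det.re)
      ≤ (Fintype.card (Equiv.Perm n)) * mx ^ (Fintype.card n) :=
    le_trans (log_le_abs _) (le_trans hre hdet)
  rw [Real.logb]
  exact (div_le_div_iff_of_pos_right (Real.log_pos one_lt_two)).mpr hlog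

lemma vecMulVec_posSemidef (v : n → ℂ) : (vecMulVec v (star v)).PosSemidef := by
  have h : vecMulVec v (star v) = (replicateCol Unit v) * (replicateCol Unit v)ᴴ := by
    rw [vecMulVec_eq Unit v (star v)]
    congr 1
  rw [h]
  exact posSemidef_self_mul_conjTranspose _


lemma rate_eq {X A : Matrix n n ℂ} (hX : X.PosDef) (hXA : (X + A).PosDef) :
    Real.logb 2 ((1 + X⁻¹ * A).det.re) = gfun A X / Real.log 2 := by
  have hdX : X.det ≠ 0 := hX.det_pos.ne'
  have hXu : IsUnit X.det := hdX.isUnit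
  have h1 : (1 : Matrix n n ℂ) + X⁻¹ * A = X⁻¹ * (X + A) := by
    rw [Matrix.mul_add, Matrix.nonsing_inv_mul X hXu]
  have hx : 0 < X.det.re := posDef_det_re_pos hX
  have hy : 0 < (X + A).det.re := posDef_det_re_pos hXA
  have hdet : ((1 : Matrix n n ℂ) + X⁻¹ * A).det = (((X + A).det.re / X.det.re : ℝ) : ℂ) := by
    rw [h1, det_mul, det_nonsing_inv, Ring.inverse_eq_inv,
      herm_det_real hX.1, herm_det_real hXA.1]
    push_cast
    simp only [Complex.ofReal_re]
    ring
  rw [hdet, Complex.ofReal_re, Real.logb, Real.log_div hy.ne' hx.ne']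
  rfl


end Aux

/-- The achievable rate `R(S_E, S_I) = log₂ det(I + (F S_E Fᴴ + σ² I)⁻¹ H S_I Hᴴ)` of the
MIMO WIT link (in bps/Hz). -/
noncomputable def rateR {NI MEdim MI : ℕ} (σsq : ℝ)
    (F : Matrix (Fin NI) (Fin MEdim) ℂ) (H : Matrix (Fin NI) (Fin MI) ℂ)
    (SE : Matrix (Fin MEdim) (Fin MEdim) ℂ) (SI : Matrix (Fin MI) (Fin MI) ℂ) : ℝ :=
  Real.logb 2 ((1 + (F * SE * Fᴴ + (σsq : ℂ) • 1)⁻¹ * (H * SI * Hᴴ)).det.re)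

/-- **Proposition 4.3.** Under the single-beam time-sharing WET scheme (rank-one
covariances `S_{E,i} = P_E w_i w_iᴴ` on sub-blocks of lengths `t_i = γ_i T / P_E`), the
maximum average WIT rate over per-sub-block information covariances (problem (P3)) is at
least the maximum WIT rate under the multi-beam covariance `S_E*` (problem (P2)). -/
theorem single_beam_rate_at_least_multi_beam
    (NI MEdim MI d : ℕ) (σsq PI PE T : ℝ)
    (hσ : 0 < σsq) (hPI : 0 < PI) (hPE : 0 < PE) (hT : 0 < T)
    (F : Matrix (Fin NI) (Fin MEdim) ℂ) (H : Matrix (Fin NI) (Fin MI) ℂ)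
    (SEstar : Matrix (Fin MEdim) (Fin MEdim) ℂ) (hSEstar : SEstar.PosSemidef)
    (htr : SEstar.trace = (PE : ℂ))
    (γ : Fin d → ℝ) (hγ : ∀ i, 0 < γ i)
    (w : Fin d → (Fin MEdim → ℂ))
    (horth : ∀ i j, star (w i) ⬝ᵥ w j = if i = j then 1 else 0)
    (hdecomp : SEstar = ∑ i, (γ i : ℂ) • vecMulVec (w i) (star (w i)))
    (t : Fin d → ℝ) (ht : ∀ i, t i = γ i * T / PE)
    (SEi : Fin d → Matrix (Fin MEdim) (Fin MEdim) ℂ)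
    (hSEi : ∀ i, SEi i = (PE : ℂ) • vecMulVec (w i) (star (w i))) :
    sSup {x : ℝ | ∃ SI : Matrix (Fin MI) (Fin MI) ℂ,
        SI.PosSemidef ∧ SI.trace.re ≤ PI ∧ x = rateR σsq F H SEstar SI}
      ≤ sSup {x : ℝ | ∃ SIs : Fin d → Matrix (Fin MI) (Fin MI) ℂ,
        (∀ i, (SIs i).PosSemidef ∧ (SIs i).trace.re ≤ PI) ∧
          x = (1 / T) * ∑ i, t i * rateR σsq F H (SEi i) (SIs i)} := by
  classical
  set RHS := {x : ℝ | ∃ SIs : Fin d → Matrix (Fin MI) (Fin MI) ℂ,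
        (∀ i, (SIs i).PosSemidef ∧ (SIs i).trace.re ≤ PI) ∧
          x = (1 / T) * ∑ i, t i * rateR σsq F H (SEi i) (SIs i)} with hRHS
  -- basic positivity facts
  have ht_pos : ∀ i, 0 < t i := fun i => by
    rw [ht i]; exact div_pos (mul_pos (hγ i) hT) hPE
  have hσ1PD : (((σsq : ℂ)) • (1 : Matrix (Fin NI) (Fin NI) ℂ)).PosDef := by
    rw [← real_smul_mat]
    exact posDef_real_smul hσ Matrix.PosDef.one
  have hSEiPSD : ∀ i, (SEi i).PosSemidef := fun i => by
    rw [hSEi i, ← real_smul_mat]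
    exact posSemidef_real_smul hPE.le (vecMulVec_posSemidef (w i))
  set Xst : Matrix (Fin NI) (Fin NI) ℂ := F * SEstar * Fᴴ + (σsq : ℂ) • 1 with hXst
  set Xi : Fin d → Matrix (Fin NI) (Fin NI) ℂ :=
    fun i => F * SEi i * Fᴴ + (σsq : ℂ) • 1 with hXi
  have hXstPD : Xst.PosDef :=
    Matrix.PosDef.posSemidef_add (hSEstar.mul_mul_conjTranspose_same F) hσ1PD
  have hXiPD : ∀ i, (Xi i).PosDef := fun i =>
    Matrix.PosDef.posSemidef_add ((hSEiPSD i).mul_mul_conjTranspose_same F) hσ1PD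
  -- sum of eigenvalues is PE
  have htrv : ∀ i, (vecMulVec (w i) (star (w i))).trace = 1 := by
    intro i
    have h1 : (vecMulVec (w i) (star (w i))).trace = ∑ k, w i k * star (w i k) := by
      rw [Matrix.trace]
      refine Finset.sum_congr rfl fun k _ => ?_
      rfl
    have h2 : star (w i) ⬝ᵥ w i = 1 := by simpa using horth i i
    rw [h1, ← h2, dotProduct]
    refine Finset.sum_congr rfl fun k _ => ?_
    rw [mul_comm]
    rfl
  have hγsumC : (∑ i, (γ i : ℂ)) = (PE : ℂ) := by
    rw [← htr, hdecomp, Matrix.trace_sum]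
    refine Finset.sum_congr rfl fun i _ => ?_
    rw [Matrix.trace_smul, htrv i, smul_eq_mul, mul_one]
  have hγsum : (∑ i, γ i) = PE := by
    have := congrArg Complex.re hγsumC
    rw [Complex.re_sum] at this
    simpa using this
  set lam : Fin d → ℝ := fun i => γ i / PE with hlam
  have hlam_pos : ∀ i, 0 < lam i := fun i => div_pos (hγ i) hPE
  have hlam_sum : ∑ i, lam i = 1 := by
    rw [hlam, ← Finset.sum_div, hγsum, div_self hPE.ne']
  -- convex combination identity
  have hcomb : ∑ i, lam i • Xi i = Xst := by
    have hterm : ∀ i, lam i • Xi i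
        = F * ((γ i : ℂ) • vecMulVec (w i) (star (w i))) * Fᴴ
          + lam i • ((σsq : ℂ) • (1 : Matrix (Fin NI) (Fin NI) ℂ)) := by
      intro i
      rw [hXi, smul_add]
      congr 1
      have e1 : ∀ (c : ℂ), F * (c • vecMulVec (w i) (star (w i))) * Fᴴ
          = c • (F * vecMulVec (w i) (star (w i)) * Fᴴ) := fun c => by
        rw [Matrix.mul_smul, Matrix.smul_mul]
      rw [real_smul_mat, hSEi i, e1, e1, smul_smul]
      congr 1
      have hPEC : (PE : ℂ) ≠ 0 := by exact_mod_cast hPE.ne'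
      rw [hlam]
      push_cast
      rw [div_mul_cancel₀ _ hPEC]
    rw [Finset.sum_congr rfl fun i _ => hterm i, Finset.sum_add_distrib,
      ← Finset.sum_smul, hlam_sum, one_smul, ← Matrix.sum_mul, ← Matrix.mul_sum,
      ← hdecomp, hXst]
  -- bounds for RHS
  choose Bd hBd using fun i : Fin d =>
    rate_bound ((F * SEi i * Fᴴ + (σsq : ℂ) • 1)⁻¹) H hPI.le
  have hrate_bd : ∀ (i : Fin d) (SI : Matrix (Fin MI) (Fin MI) ℂ),
      SI.PosSemidef → SI.trace.re ≤ PI → rateR σsq F H (SEi i) SI ≤ Bd i := by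
    intro i SI h1 h2
    exact hBd i SI h1 h2
  have hBdd : BddAbove RHS := by
    refine ⟨(1 / T) * ∑ i, t i * Bd i, ?_⟩
    rintro x ⟨SIs, hc, rfl⟩
    refine mul_le_mul_of_nonneg_left ?_ (by positivity)
    refine Finset.sum_le_sum fun i _ => ?_
    exact mul_le_mul_of_nonneg_left (hrate_bd i (SIs i) (hc i).1 (hc i).2) (ht_pos i).le
  have h0mem : (0 : ℝ) ∈ RHS := by
    refine ⟨fun _ => 0, fun i => ⟨Matrix.PosSemidef.zero, by simp [hPI.le]⟩, ?_⟩
    have : ∀ i : Fin d, rateR σsq F H (SEi i) 0 = 0 := by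
      intro i
      unfold rateR
      rw [Matrix.mul_zero, Matrix.zero_mul, Matrix.mul_zero, add_zero, det_one]
      simp
    simp [this]
  have hsup0 : (0 : ℝ) ≤ sSup RHS := le_csSup hBdd h0mem
  -- main bound
  refine Real.sSup_le ?_ hsup0
  rintro x ⟨SI, hSIpsd, hSItr, rfl⟩
  set A : Matrix (Fin NI) (Fin NI) ℂ := H * SI * Hᴴ with hA
  have hApsd : A.PosSemidef := hSIpsd.mul_mul_conjTranspose_same H
  have hXstA : (Xst + A).PosDef := hXstPD.add_posSemidef hApsd
  have hXiA : ∀ i, (Xi i + A).PosDef := fun i => (hXiPD i).add_posSemidef hApsd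
  have hlog2 : 0 < Real.log 2 := Real.log_pos one_lt_two
  have hx_eq : rateR σsq F H SEstar SI = gfun A Xst / Real.log 2 := by
    unfold rateR
    exact rate_eq hXstPD hXstA
  have hr_eq : ∀ i, rateR σsq F H (SEi i) SI = gfun A (Xi i) / Real.log 2 := by
    intro i
    unfold rateR
    exact rate_eq (hXiPD i) (hXiA i)
  have hjensen : gfun A Xst ≤ ∑ i, lam i * gfun A (Xi i) := by
    rw [← hcomb]
    exact gfun_jensen hApsd Xi hXiPD lam (fun i => (hlam_pos i).le) hlam_sum
  have hysum : ∑ i, lam i * (gfun A (Xi i) / Real.log 2)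
      = (1 / T) * ∑ i, t i * rateR σsq F H (SEi i) SI := by
    rw [Finset.mul_sum]
    refine Finset.sum_congr rfl fun i _ => ?_
    rw [hr_eq i, ht i, hlam]
    field_simp
  have hxy : rateR σsq F H SEstar SI
      ≤ (1 / T) * ∑ i, t i * rateR σsq F H (SEi i) SI := by
    rw [hx_eq, ← hysum]
    have h1 : gfun A Xst / Real.log 2 ≤ (∑ i, lam i * gfun A (Xi i)) / Real.log 2 :=
      (div_le_div_iff_of_pos_right hlog2).mpr hjensen
    rw [Finset.sum_div] at h1
    refine h1.trans (le_of_eq (Finset.sum_congr rfl fun i _ => ?_))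
    rw [mul_div_assoc]
  refine hxy.trans (le_csSup hBdd ?_)
  exact ⟨fun _ => SI, fun i => ⟨hSIpsd, hSItr⟩, rfl⟩
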